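/- Let r ≥ 0. Then for every μ ∈ ℂ with Im μ > −r, every j ∈ {1,2}, and every x ∈ [0,1], one has |(K_j² e)(x)| ≤ (e^{2r} + 1/2) ‖σ‖_{L¹[0,1]} γ̃(μ); in particular there is a constant c > 0, depending only on r, σ₁, σ₂, with sup_{x∈[0,1]} |(K_j² e)(x)| ≤ c γ̃(μ) for all such μ. -/

import Mathlib

open MeasureTheory Set
open scoped ENNReal

noncomputable section

/-- The integral operator `K₁` associated with the Dirac system. -/
def K1 (σ₁ σ₂ : ℝ → ℂ) (μ : ℂ) (z : ℝ → ℂ) : ℝ → ℂ := fun x =>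
  ∫ t in (0:ℝ)..x, σ₁ t * ∫ s in t..(1:ℝ),
    Complex.exp (2 * Complex.I * μ * (s - t)) * σ₂ s * z s

/-- The integral operator `K₂` associated with the Dirac system. -/
def K2 (σ₁ σ₂ : ℝ → ℂ) (μ : ℂ) (z : ℝ → ℂ) : ℝ → ℂ := fun x =>
  ∫ t in x..(1:ℝ), σ₂ t * ∫ s in (0:ℝ)..t,
    Complex.exp (2 * Complex.I * μ * (t - s)) * σ₁ s * z s

/-- `γ₀₁(x,μ) = |∫₀ˣ e^{2iμ(x−t)} σ₁(t) dt|`. -/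
def gamma01 (σ₁ : ℝ → ℂ) (μ : ℂ) (x : ℝ) : ℝ :=
  ‖∫ t in (0:ℝ)..x, Complex.exp (2 * Complex.I * μ * (x - t)) * σ₁ t‖

/-- `γ₀₂(x,μ) = |∫ₓ¹ e^{2iμ(t−x)} σ₂(t) dt|`. -/
def gamma02 (σ₂ : ℝ → ℂ) (μ : ℂ) (x : ℝ) : ℝ :=
  ‖∫ t in x..(1:ℝ), Complex.exp (2 * Complex.I * μ * (t - x)) * σ₂ t‖

/-- `γ₁(μ) = ‖γ₀₁(·,μ)‖_{L^q[0,1]}`. -/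
def gamma1 (σ₁ : ℝ → ℂ) (q : ℝ≥0∞) (μ : ℂ) : ℝ :=
  (eLpNorm (fun x => gamma01 σ₁ μ x) q (volume.restrict (Icc (0:ℝ) 1))).toReal

/-- `γ₂(μ) = ‖γ₀₂(·,μ)‖_{L^q[0,1]}`. -/
def gamma2 (σ₂ : ℝ → ℂ) (q : ℝ≥0∞) (μ : ℂ) : ℝ :=
  (eLpNorm (fun x => gamma02 σ₂ μ x) q (volume.restrict (Icc (0:ℝ) 1))).toReal

/-- `γ̃(μ) = ∫₀¹ |σ₂| γ₀₁² + ∫₀¹ |σ₁| γ₀₂²`. -/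
def gammaT (σ₁ σ₂ : ℝ → ℂ) (μ : ℂ) : ℝ :=
  (∫ s in (0:ℝ)..1, ‖σ₂ s‖ * (gamma01 σ₁ μ s) ^ 2)
    + ∫ s in (0:ℝ)..1, ‖σ₁ s‖ * (gamma02 σ₂ μ s) ^ 2

/-- `‖σ‖_{L^p[0,1]}` where `σ(x) = max(|σ₁(x)|,|σ₂(x)|)`. -/
def sigmaNorm (σ₁ σ₂ : ℝ → ℂ) (p : ℝ≥0∞) : ℝ :=
  (eLpNorm (fun x => max ‖σ₁ x‖ ‖σ₂ x‖) p (volume.restrict (Icc (0:ℝ) 1))).toReal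

/-- The constant function `1` on `[0,1]`. -/
def eFun : ℝ → ℂ := fun _ => 1

/-- A solution of the Dirac system `y₁' + σ₁ y₂ = iμ y₁`, `y₂' + σ₂ y₁ = −iμ y₂` on `[0,1]`,
with `y₁, y₂` absolutely continuous (i.e. in `W^{1,1}[0,1]`, so each is the indefinite
integral of an integrable function, and the equations hold a.e. with those derivatives). -/
def IsDiracSolution (σ₁ σ₂ : ℝ → ℂ) (μ : ℂ) (y₁ y₂ : ℝ → ℂ) : Prop :=
  ∃ g₁ g₂ : ℝ → ℂ,
    IntervalIntegrable g₁ volume 0 1 ∧ IntervalIntegrable g₂ volume 0 1 ∧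
    (∀ x ∈ Icc (0:ℝ) 1, y₁ x = y₁ 0 + ∫ t in (0:ℝ)..x, g₁ t) ∧
    (∀ x ∈ Icc (0:ℝ) 1, y₂ x = y₂ 0 + ∫ t in (0:ℝ)..x, g₂ t) ∧
    (∀ᵐ x ∂(volume.restrict (Icc (0:ℝ) 1)),
      g₁ x + σ₁ x * y₂ x = Complex.I * μ * y₁ x) ∧
    (∀ᵐ x ∂(volume.restrict (Icc (0:ℝ) 1)),
      g₂ x + σ₂ x * y₁ x = -(Complex.I * μ) * y₂ x)


/-- Triangle Fubini swap. -/
lemma tri_swap {𝕜 : Type*} [RCLike 𝕜] {g h : ℝ → 𝕜} {a b : ℝ} (hab : a ≤ b)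
    (hg : IntegrableOn g (Ioc a b)) (hh : IntegrableOn h (Ioc a b)) :
    (∫ s in a..b, h s * ∫ u in a..s, g u) = ∫ u in a..b, g u * ∫ s in u..b, h s := by
  set ν := volume.restrict (Ioc a b) with hν
  have hF : Integrable (fun p : ℝ × ℝ => if p.2 ≤ p.1 then g p.2 * h p.1 else 0) (ν.prod ν) := by
    have h1 : Integrable (fun p : ℝ × ℝ => h p.1 * g p.2) (ν.prod ν) := Integrable.mul_prod hh hg
    have h2 := h1.indicator (s := {p : ℝ × ℝ | p.2 ≤ p.1})
      (measurableSet_le measurable_snd measurable_fst)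
    refine h2.congr (Filter.Eventually.of_forall fun p => ?_)
    by_cases hp : p.2 ≤ p.1 <;> simp [indicator_apply, hp, mul_comm]
  have hL : (∫ s in a..b, h s * ∫ u in a..s, g u)
      = ∫ s, (∫ u, (if u ≤ s then g u * h s else 0) ∂ν) ∂ν := by
    rw [intervalIntegral.integral_of_le hab]
    refine setIntegral_congr_fun measurableSet_Ioc fun s hs => ?_
    have e1 : Ioc a b ∩ Iic s = Ioc a s := by
      ext u
      simp only [mem_inter_iff, mem_Ioc, mem_Iic]
      exact ⟨fun ⟨h1, h2⟩ => ⟨h1.1, h2⟩, fun ⟨h1, h2⟩ => ⟨⟨h1, h2.trans hs.2⟩, h2⟩⟩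
    have e2 : (∫ u in a..s, g u) = ∫ u, (if u ≤ s then g u else 0) ∂ν := by
      rw [intervalIntegral.integral_of_le hs.1.le, hν]
      have e3 : (fun u => if u ≤ s then g u else 0) = (Iic s).indicator g := by
        ext u; simp [indicator_apply]
      rw [e3, setIntegral_indicator measurableSet_Iic, e1]
    rw [e2, ← integral_const_mul]
    congr 1
    ext u
    by_cases hu : u ≤ s <;> simp [hu, mul_comm]
  have hR : (∫ u in a..b, g u * ∫ s in u..b, h s)
      = ∫ u, (∫ s, (if u ≤ s then g u * h s else 0) ∂ν) ∂ν := by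
    rw [intervalIntegral.integral_of_le hab]
    refine setIntegral_congr_fun measurableSet_Ioc fun u hu => ?_
    have e1 : Ioc a b ∩ Ici u = Icc u b := by
      ext s
      simp only [mem_inter_iff, mem_Ioc, mem_Icc, mem_Ici]
      exact ⟨fun ⟨h1, h2⟩ => ⟨h2, h1.2⟩, fun ⟨h1, h2⟩ => ⟨⟨lt_of_lt_of_le hu.1 h1, h2⟩, h1⟩⟩
    have e2 : (∫ s in u..b, h s) = ∫ s, (if u ≤ s then h s else 0) ∂ν := by
      rw [intervalIntegral.integral_of_le hu.2, hν]
      have e3 : (fun s => if u ≤ s then h s else 0) = (Ici u).indicator h := by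
        ext s; simp [indicator_apply]
      rw [e3, setIntegral_indicator measurableSet_Ici, e1, ← integral_Icc_eq_integral_Ioc]
    rw [e2, ← integral_const_mul]
    congr 1
    ext s
    by_cases hs : u ≤ s <;> simp [hs]
  rw [hL, hR]
  exact
    (integral_integral_swap (f := fun s u => if u ≤ s then g u * h s else 0)
      (hF.congr (Filter.Eventually.of_forall fun p => by by_cases hp : p.2 ≤ p.1 <;> simp [Function.uncurry, hp, mul_comm]))).symm
      |>.symm

/-- Cauchy–Schwarz: `(∫ f g)² ≤ (∫ f)(∫ f g²)` for nonneg `f`. -/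
lemma cs_sq {f g : ℝ → ℝ} (hf0 : ∀ x, 0 ≤ f x) (hg0 : ∀ x, 0 ≤ g x)
    (hfi : IntegrableOn f (Ioc (0:ℝ) 1))
    (hfg2 : IntegrableOn (fun x => f x * g x ^ 2) (Ioc (0:ℝ) 1))
    (hgm : AEStronglyMeasurable g (volume.restrict (Ioc (0:ℝ) 1))) :
    (∫ x in Ioc (0:ℝ) 1, f x * g x) ^ 2
      ≤ (∫ x in Ioc (0:ℝ) 1, f x) * ∫ x in Ioc (0:ℝ) 1, f x * g x ^ 2 := by
  set μ' := volume.restrict (Ioc (0:ℝ) 1) with hμ'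
  set F : ℝ → ℝ := fun x => Real.sqrt (f x) with hF
  set Gg : ℝ → ℝ := fun x => Real.sqrt (f x) * g x with hGg
  have hFm : AEStronglyMeasurable F μ' :=
    (Real.continuous_sqrt.comp_aestronglyMeasurable hfi.aestronglyMeasurable)
  have hGm : AEStronglyMeasurable Gg μ' := hFm.mul hgm
  have hF2 : MemLp F (ENNReal.ofReal 2) μ' := by
    have : ENNReal.ofReal (2:ℝ) = 2 := by norm_num
    rw [this, memLp_two_iff_integrable_sq hFm]
    refine hfi.congr (Filter.Eventually.of_forall fun x => ?_)
    simp [hF, Real.sq_sqrt (hf0 x)]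
  have hG2 : MemLp Gg (ENNReal.ofReal 2) μ' := by
    have : ENNReal.ofReal (2:ℝ) = 2 := by norm_num
    rw [this, memLp_two_iff_integrable_sq hGm]
    refine hfg2.congr (Filter.Eventually.of_forall fun x => ?_)
    simp only [hGg]
    rw [mul_pow, Real.sq_sqrt (hf0 x)]
  have hpq : Real.HolderConjugate 2 2 := Real.HolderConjugate.two_two
  have key := integral_mul_le_Lp_mul_Lq_of_nonneg hpq
    (Filter.Eventually.of_forall fun x => Real.sqrt_nonneg _)
    (Filter.Eventually.of_forall fun x => mul_nonneg (Real.sqrt_nonneg _) (hg0 x))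
    hF2 hG2
  have e1 : (∫ x, F x * Gg x ∂μ') = ∫ x, f x * g x ∂μ' := by
    refine integral_congr_ae (Filter.Eventually.of_forall fun x => ?_)
    simp only [hF, hGg]
    rw [← mul_assoc, Real.mul_self_sqrt (hf0 x)]
  have e2 : (∫ x, F x ^ (2:ℝ) ∂μ') = ∫ x, f x ∂μ' := by
    refine integral_congr_ae (Filter.Eventually.of_forall fun x => ?_)
    simp only [Real.rpow_two, hF, Real.sq_sqrt (hf0 x)]
  have e3 : (∫ x, Gg x ^ (2:ℝ) ∂μ') = ∫ x, f x * g x ^ 2 ∂μ' := by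
    refine integral_congr_ae (Filter.Eventually.of_forall fun x => ?_)
    simp only [Real.rpow_two, hGg]
    rw [mul_pow, Real.sq_sqrt (hf0 x)]
  rw [e1, e2, e3] at key
  set A := ∫ x, f x ∂μ' with hA
  set B := ∫ x, f x * g x ^ 2 ∂μ' with hB
  have hA0 : 0 ≤ A := integral_nonneg fun x => hf0 x
  have hB0 : 0 ≤ B := integral_nonneg fun x => mul_nonneg (hf0 x) (sq_nonneg _)
  have hI0 : 0 ≤ ∫ x, f x * g x ∂μ' := integral_nonneg fun x => mul_nonneg (hf0 x) (hg0 x)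
  have hAr : A ^ (1/(2:ℝ)) = Real.sqrt A := (Real.sqrt_eq_rpow A).symm
  have hBr : B ^ (1/(2:ℝ)) = Real.sqrt B := (Real.sqrt_eq_rpow B).symm
  rw [hAr, hBr] at key
  nlinarith [Real.sq_sqrt hA0, Real.sq_sqrt hB0, Real.sqrt_nonneg A, Real.sqrt_nonneg B,
    mul_nonneg (Real.sqrt_nonneg A) (Real.sqrt_nonneg B)]

/-- `∫₀¹ φ(t) ∫₀ᵗ φ = (∫₀¹φ)²/2`. -/
lemma half_sq {φ : ℝ → ℝ} (hφ : IntegrableOn φ (Icc (0:ℝ) 1)) :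
    (∫ t in (0:ℝ)..1, φ t * ∫ u in (0:ℝ)..t, φ u) = (∫ t in (0:ℝ)..1, φ t) ^ 2 / 2 := by
  have hIoc : IntegrableOn φ (Ioc (0:ℝ) 1) := hφ.mono_set Ioc_subset_Icc_self
  have hii : ∀ a b : ℝ, a ∈ Icc (0:ℝ) 1 → b ∈ Icc (0:ℝ) 1 → IntervalIntegrable φ volume a b := by
    intro a b ha hb
    rw [intervalIntegrable_iff]
    refine hφ.mono_set fun x hx => ?_
    rcases Set.mem_uIoc.mp hx with h | h
    · exact ⟨ha.1.trans h.1.le, h.2.trans hb.2⟩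
    · exact ⟨hb.1.trans h.1.le, h.2.trans ha.2⟩
  have h01 : (0:ℝ) ∈ Icc (0:ℝ) 1 := ⟨le_refl 0, zero_le_one⟩
  have h11 : (1:ℝ) ∈ Icc (0:ℝ) 1 := ⟨zero_le_one, le_refl 1⟩
  set Φ : ℝ → ℝ := fun t => ∫ u in (0:ℝ)..t, φ u with hΦ
  have hΦc : ContinuousOn Φ (Icc (0:ℝ) 1) := by
    have := intervalIntegral.continuousOn_primitive_interval
      (a := (0:ℝ)) (b := (1:ℝ)) (μ := volume) (f := φ)
      (by rwa [uIcc_of_le (zero_le_one' ℝ)])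
    rwa [uIcc_of_le (zero_le_one' ℝ)] at this
  set C := ∫ t in (0:ℝ)..1, φ t with hC
  have key := tri_swap (𝕜 := ℝ) (g := φ) (h := φ) (a := 0) (b := 1) zero_le_one hIoc hIoc
  have hsplit : ∀ t ∈ Icc (0:ℝ) 1, (∫ s in t..(1:ℝ), φ s) = C - Φ t := by
    intro t ht
    have := intervalIntegral.integral_add_adjacent_intervals
      (hii 0 t h01 ht) (hii t 1 ht h11)
    rw [← hC] at this
    simp only [hΦ]
    linarith [this]
  have hΦi : IntervalIntegrable (fun t => φ t * Φ t) volume 0 1 := by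
    refine (hii 0 1 h01 h11).mul_continuousOn ?_
    rwa [uIcc_of_le (zero_le_one' ℝ)]
  have hCi : IntervalIntegrable (fun t => φ t * C) volume 0 1 := (hii 0 1 h01 h11).mul_const C
  have key2 : (∫ t in (0:ℝ)..1, φ t * Φ t) = ∫ t in (0:ℝ)..1, (φ t * C - φ t * Φ t) := by
    rw [key]
    refine intervalIntegral.integral_congr fun t ht => ?_
    rw [uIcc_of_le (zero_le_one' ℝ)] at ht
    rw [hsplit t ht]
    ring
  rw [intervalIntegral.integral_sub hCi hΦi, intervalIntegral.integral_mul_const] at key2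
  have : (∫ t in (0:ℝ)..1, φ t * Φ t) = C ^ 2 / 2 := by
    rw [← hC] at key2
    nlinarith [key2]
  simpa [hΦ, hC] using this

lemma iiOn {E : Type*} [NormedAddCommGroup E] {f : ℝ → E}
    (hf : IntegrableOn f (Icc (0:ℝ) 1)) {a b : ℝ}
    (ha : a ∈ Icc (0:ℝ) 1) (hb : b ∈ Icc (0:ℝ) 1) : IntervalIntegrable f volume a b := by
  rw [intervalIntegrable_iff]
  refine hf.mono_set fun x hx => ?_
  rcases Set.mem_uIoc.mp hx with h | h
  · exact ⟨ha.1.trans h.1.le, h.2.trans hb.2⟩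
  · exact ⟨hb.1.trans h.1.le, h.2.trans ha.2⟩

lemma uIccSub {a b : ℝ} (ha : a ∈ Icc (0:ℝ) 1) (hb : b ∈ Icc (0:ℝ) 1) :
    uIcc a b ⊆ Icc (0:ℝ) 1 := by
  rw [← uIcc_of_le (zero_le_one' ℝ)]
  exact uIcc_subset_uIcc (by rwa [uIcc_of_le (zero_le_one' ℝ)])
    (by rwa [uIcc_of_le (zero_le_one' ℝ)])

def Gfun (σ₂ : ℝ → ℂ) (μ : ℂ) : ℝ → ℂ := fun t =>
  ∫ s in t..(1:ℝ), Complex.exp (2 * Complex.I * μ * (s - t)) * σ₂ s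

lemma gamma02_eq (σ₂ : ℝ → ℂ) (μ : ℂ) (x : ℝ) : gamma02 σ₂ μ x = ‖Gfun σ₂ μ x‖ := rfl

lemma Gfun_cont {σ₂ : ℝ → ℂ} (μ : ℂ) (h2 : IntegrableOn σ₂ (Icc (0:ℝ) 1)) :
    ContinuousOn (Gfun σ₂ μ) (Icc (0:ℝ) 1) := by
  have hEc : Continuous fun u : ℝ => Complex.exp (2 * Complex.I * μ * (u:ℂ)) :=
    Complex.continuous_exp.comp (continuous_const.mul Complex.continuous_ofReal)
  have hIE : IntegrableOn (fun s : ℝ => Complex.exp (2 * Complex.I * μ * (s:ℂ)) * σ₂ s)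
      (Icc (0:ℝ) 1) := h2.continuousOn_mul hEc.continuousOn isCompact_Icc
  have hP : ContinuousOn (fun t : ℝ => ∫ s in t..(1:ℝ),
      Complex.exp (2 * Complex.I * μ * (s:ℂ)) * σ₂ s) (Icc (0:ℝ) 1) := by
    have := intervalIntegral.continuousOn_primitive_interval_left
      (f := fun s : ℝ => Complex.exp (2 * Complex.I * μ * (s:ℂ)) * σ₂ s)
      (μ := volume) (a := (0:ℝ)) (b := (1:ℝ))
      (by rwa [uIcc_of_le (zero_le_one' ℝ)])
    rwa [uIcc_of_le (zero_le_one' ℝ)] at this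
  have hNc : Continuous fun t : ℝ => Complex.exp (-(2 * Complex.I * μ * (t:ℂ))) :=
    Complex.continuous_exp.comp (continuous_const.mul Complex.continuous_ofReal).neg
  refine ContinuousOn.congr (hNc.continuousOn.mul hP) fun t _ => ?_
  show Gfun σ₂ μ t = _
  rw [Gfun, Pi.mul_apply, ← intervalIntegral.integral_const_mul]
  refine intervalIntegral.integral_congr fun s _ => ?_
  have harg : 2 * Complex.I * μ * ((s:ℂ) - (t:ℂ))
      = -(2 * Complex.I * μ * (t:ℂ)) + 2 * Complex.I * μ * (s:ℂ) := by ring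
  rw [harg, Complex.exp_add, mul_assoc]

lemma K1e_eq (σ₁ σ₂ : ℝ → ℂ) (μ : ℂ) (x : ℝ) :
    K1 σ₁ σ₂ μ eFun x = ∫ u in (0:ℝ)..x, σ₁ u * Gfun σ₂ μ u := by
  simp only [K1, eFun, mul_one, Gfun]

lemma exp_re_bound (μ : ℂ) (r : ℝ) (hr : 0 ≤ r) (him : -r < μ.im) {t u : ℝ}
    (htu : t ≤ u) (hu1 : u - t ≤ 1) :
    ‖Complex.exp (2 * Complex.I * μ * ((u:ℂ) - (t:ℂ)))‖ ≤ Real.exp (2 * r) := by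
  have hcast : ((u:ℂ) - (t:ℂ)) = ((u - t : ℝ) : ℂ) := by push_cast; ring
  rw [hcast, Complex.norm_exp]
  apply Real.exp_le_exp.2
  have hre : (2 * Complex.I * μ * ((u - t : ℝ) : ℂ)).re = -(2 * μ.im * (u - t)) := by
    simp [Complex.mul_re, Complex.mul_im]
    try ring
  rw [hre]
  nlinarith [him, sub_nonneg.mpr htu]

lemma K1_bound (σ₁ σ₂ : ℝ → ℂ)
    (h1 : IntegrableOn σ₁ (Icc (0:ℝ) 1)) (h2 : IntegrableOn σ₂ (Icc (0:ℝ) 1))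
    (r : ℝ) (hr : 0 ≤ r) (μ : ℂ) (him : -r < μ.im) (x : ℝ) (hx : x ∈ Icc (0:ℝ) 1) :
    ‖K1 σ₁ σ₂ μ (K1 σ₁ σ₂ μ eFun) x‖
      ≤ (Real.exp (2*r) + 1/2) * (∫ t in (0:ℝ)..1, max ‖σ₁ t‖ ‖σ₂ t‖)
          * ((∫ s in (0:ℝ)..1, ‖σ₁ s‖ * (gamma02 σ₂ μ s) ^ 2)) := by
  have h01 : (0:ℝ) ∈ Icc (0:ℝ) 1 := ⟨le_refl 0, zero_le_one⟩
  have h11 : (1:ℝ) ∈ Icc (0:ℝ) 1 := ⟨zero_le_one, le_refl 1⟩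
  set G : ℝ → ℂ := Gfun σ₂ μ with hGdef
  have hGc : ContinuousOn G (Icc (0:ℝ) 1) := Gfun_cont μ h2
  set H : ℝ → ℂ := K1 σ₁ σ₂ μ eFun with hHdef
  have hHeq : ∀ s : ℝ, H s = ∫ u in (0:ℝ)..s, σ₁ u * G u := fun s => K1e_eq σ₁ σ₂ μ s
  have hσG : ∀ {a b : ℝ}, a ∈ Icc (0:ℝ) 1 → b ∈ Icc (0:ℝ) 1 →
      IntervalIntegrable (fun u => σ₁ u * G u) volume a b := by
    intro a b ha hb
    exact iiOn (h1.mul_continuousOn hGc isCompact_Icc) ha hb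
  have hHc : ContinuousOn H (Icc (0:ℝ) 1) := by
    have hint : IntegrableOn (fun u => σ₁ u * G u) (uIcc (0:ℝ) 1) := by
      rw [uIcc_of_le (zero_le_one' ℝ)]
      exact h1.mul_continuousOn hGc isCompact_Icc
    have := intervalIntegral.continuousOn_primitive_interval (μ := volume) hint
    rw [uIcc_of_le (zero_le_one' ℝ)] at this
    exact ContinuousOn.congr this fun s _ => hHeq s
  -- the key identity
  have key : ∀ t ∈ Icc (0:ℝ) 1,
      (∫ s in t..(1:ℝ), Complex.exp (2 * Complex.I * μ * ((s:ℂ) - (t:ℂ))) * σ₂ s * H s)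
      = G t * H t + ∫ u in t..(1:ℝ),
          σ₁ u * G u * (Complex.exp (2 * Complex.I * μ * ((u:ℂ) - (t:ℂ))) * G u) := by
    intro t ht
    have hEcont : Continuous fun s : ℝ => Complex.exp (2 * Complex.I * μ * ((s:ℂ) - (t:ℂ))) :=
      Complex.continuous_exp.comp
        (continuous_const.mul (Complex.continuous_ofReal.sub continuous_const))
    have hEσ : IntervalIntegrable
        (fun s => Complex.exp (2 * Complex.I * μ * ((s:ℂ) - (t:ℂ))) * σ₂ s) volume t 1 :=
      (iiOn h2 ht h11).continuousOn_mul hEcont.continuousOn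
    have hprim : ContinuousOn (fun s => ∫ u in t..s, σ₁ u * G u) (uIcc t (1:ℝ)) :=
      intervalIntegral.continuousOn_primitive_interval' (hσG ht h11) left_mem_uIcc
    have stepA : (∫ s in t..(1:ℝ), Complex.exp (2 * Complex.I * μ * ((s:ℂ) - (t:ℂ))) * σ₂ s * H s)
        = (∫ s in t..(1:ℝ), Complex.exp (2 * Complex.I * μ * ((s:ℂ) - (t:ℂ))) * σ₂ s * H t)
          + ∫ s in t..(1:ℝ), Complex.exp (2 * Complex.I * μ * ((s:ℂ) - (t:ℂ))) * σ₂ s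
              * ∫ u in t..s, σ₁ u * G u := by
      rw [← intervalIntegral.integral_add (hEσ.mul_const (H t)) (hEσ.mul_continuousOn hprim)]
      refine intervalIntegral.integral_congr fun s hs => ?_
      rw [uIcc_of_le ht.2] at hs
      have hs01 : s ∈ Icc (0:ℝ) 1 := ⟨ht.1.trans hs.1, hs.2⟩
      have hsplit : H s = H t + ∫ u in t..s, σ₁ u * G u := by
        rw [hHeq, hHeq]
        exact (intervalIntegral.integral_add_adjacent_intervals (hσG h01 ht) (hσG ht hs01)).symm
      rw [hsplit]; ring
    have first : (∫ s in t..(1:ℝ),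
        Complex.exp (2 * Complex.I * μ * ((s:ℂ) - (t:ℂ))) * σ₂ s * H t) = G t * H t := by
      rw [intervalIntegral.integral_mul_const]
      rfl
    have second : (∫ s in t..(1:ℝ), Complex.exp (2 * Complex.I * μ * ((s:ℂ) - (t:ℂ))) * σ₂ s
            * ∫ u in t..s, σ₁ u * G u)
        = ∫ u in t..(1:ℝ), σ₁ u * G u
            * (Complex.exp (2 * Complex.I * μ * ((u:ℂ) - (t:ℂ))) * G u) := by
      have hgI : IntegrableOn (fun u => σ₁ u * G u) (Ioc t 1) :=
        (intervalIntegrable_iff_integrableOn_Ioc_of_le ht.2).mp (hσG ht h11)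
      have hhI : IntegrableOn
          (fun s : ℝ => Complex.exp (2 * Complex.I * μ * ((s:ℂ) - (t:ℂ))) * σ₂ s) (Ioc t 1) :=
        (intervalIntegrable_iff_integrableOn_Ioc_of_le ht.2).mp hEσ
      rw [tri_swap ht.2 hgI hhI]
      refine intervalIntegral.integral_congr fun u hu => ?_
      rw [uIcc_of_le ht.2] at hu
      have e : (∫ s in u..(1:ℝ), Complex.exp (2 * Complex.I * μ * ((s:ℂ) - (t:ℂ))) * σ₂ s)
          = Complex.exp (2 * Complex.I * μ * ((u:ℂ) - (t:ℂ))) * G u := by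
        rw [hGdef, Gfun, ← intervalIntegral.integral_const_mul]
        refine intervalIntegral.integral_congr fun s _ => ?_
        have harg : 2 * Complex.I * μ * ((s:ℂ) - (t:ℂ))
            = 2 * Complex.I * μ * ((u:ℂ) - (t:ℂ)) + 2 * Complex.I * μ * ((s:ℂ) - (u:ℂ)) := by
          ring
        rw [harg, Complex.exp_add, mul_assoc]
      rw [e]
    rw [stepA, first, second]
  -- quantities
  set J := ∫ u in (0:ℝ)..1, ‖σ₁ u‖ * ‖G u‖ ^ 2 with hJdef
  have hJeq : (∫ s in (0:ℝ)..1, ‖σ₁ s‖ * (gamma02 σ₂ μ s) ^ 2) = J := by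
    rw [hJdef]
    simp only [gamma02_eq, ← hGdef]
  have hJint : IntegrableOn (fun u => ‖σ₁ u‖ * ‖G u‖ ^ 2) (Icc (0:ℝ) 1) :=
    IntegrableOn.mul_continuousOn h1.norm (hGc.norm.pow 2) isCompact_Icc
  have hJ0 : 0 ≤ J := intervalIntegral.integral_nonneg zero_le_one
    (fun u _ => mul_nonneg (norm_nonneg _) (sq_nonneg _))
  set φ : ℝ → ℝ := fun u => ‖σ₁ u‖ * ‖G u‖ with hφdef
  have hφi : IntegrableOn φ (Icc (0:ℝ) 1) := IntegrableOn.mul_continuousOn h1.norm hGc.norm isCompact_Icc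
  have hφ0 : ∀ u, 0 ≤ φ u := fun u => mul_nonneg (norm_nonneg _) (norm_nonneg _)
  set Φ : ℝ → ℝ := fun t => ∫ u in (0:ℝ)..t, φ u with hΦdef
  have hΦc : ContinuousOn Φ (Icc (0:ℝ) 1) := by
    have hint : IntegrableOn φ (uIcc (0:ℝ) 1) := by
      rw [uIcc_of_le (zero_le_one' ℝ)]; exact hφi
    have := intervalIntegral.continuousOn_primitive_interval (μ := volume) hint
    rwa [uIcc_of_le (zero_le_one' ℝ)] at this
  have hΦ0 : ∀ t ∈ Icc (0:ℝ) 1, 0 ≤ Φ t := fun t ht =>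
    intervalIntegral.integral_nonneg ht.1 (fun u _ => hφ0 u)
  have hHb : ∀ s ∈ Icc (0:ℝ) 1, ‖H s‖ ≤ Φ s := by
    intro s hs
    rw [hHeq]
    refine (intervalIntegral.norm_integral_le_integral_norm hs.1).trans_eq ?_
    exact intervalIntegral.integral_congr fun u _ => norm_mul _ _
  -- bound on the inner integral
  have hinner : ∀ t ∈ Icc (0:ℝ) 1,
      ‖∫ s in t..(1:ℝ), Complex.exp (2 * Complex.I * μ * ((s:ℂ) - (t:ℂ))) * σ₂ s * H s‖
        ≤ ‖G t‖ * ‖H t‖ + Real.exp (2*r) * J := by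
    intro t ht
    rw [key t ht]
    refine (norm_add_le _ _).trans ?_
    rw [norm_mul]
    refine add_le_add le_rfl ?_
    have hboundII : IntervalIntegrable
        (fun u => Real.exp (2*r) * (‖σ₁ u‖ * ‖G u‖^2)) volume t 1 :=
      (iiOn hJint ht h11).const_mul _
    refine (intervalIntegral.norm_integral_le_abs_of_norm_le ?_ hboundII).trans ?_
    · filter_upwards [ae_restrict_mem measurableSet_uIoc] with u hu
      rw [uIoc_of_le ht.2] at hu
      have h0u : t ≤ u := hu.1.le
      have hu1 : u - t ≤ 1 := by
        have := hu.2; have := ht.1; linarith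
      have hE := exp_re_bound μ r hr him h0u hu1
      rw [norm_mul, norm_mul, norm_mul]
      calc ‖σ₁ u‖ * ‖G u‖ * (‖Complex.exp (2 * Complex.I * μ * ((u:ℂ) - (t:ℂ)))‖ * ‖G u‖)
          ≤ ‖σ₁ u‖ * ‖G u‖ * (Real.exp (2*r) * ‖G u‖) := by gcongr
        _ = Real.exp (2*r) * (‖σ₁ u‖ * ‖G u‖^2) := by ring
    · have hnn : 0 ≤ ∫ u in t..(1:ℝ), Real.exp (2*r) * (‖σ₁ u‖ * ‖G u‖^2) :=
        intervalIntegral.integral_nonneg ht.2 fun u _ =>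
          mul_nonneg (Real.exp_pos _).le (mul_nonneg (norm_nonneg _) (sq_nonneg _))
      rw [abs_of_nonneg hnn, intervalIntegral.integral_const_mul]
      have hto1 : (∫ u in t..(1:ℝ), ‖σ₁ u‖ * ‖G u‖^2) ≤ J := by
        rw [hJdef, ← intervalIntegral.integral_add_adjacent_intervals
          (iiOn hJint h01 ht) (iiOn hJint ht h11)]
        have h0t : 0 ≤ ∫ u in (0:ℝ)..t, ‖σ₁ u‖ * ‖G u‖^2 :=
          intervalIntegral.integral_nonneg ht.1 fun u _ =>
            mul_nonneg (norm_nonneg _) (sq_nonneg _)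
        linarith
      exact mul_le_mul_of_nonneg_left hto1 (Real.exp_pos _).le
  -- assembling
  have hx0 : (0:ℝ) ≤ x := hx.1
  have hxle : x ≤ 1 := hx.2
  have hmax : IntegrableOn (fun u => max ‖σ₁ u‖ ‖σ₂ u‖) (Icc (0:ℝ) 1) := by
    have hsup := h1.norm.sup h2.norm
    exact hsup.congr (Filter.Eventually.of_forall fun u => rfl)
  set S := ∫ t in (0:ℝ)..1, max ‖σ₁ t‖ ‖σ₂ t‖ with hSdef
  set N := ∫ t in (0:ℝ)..1, ‖σ₁ t‖ with hNdef
  have hN0 : 0 ≤ N := intervalIntegral.integral_nonneg zero_le_one fun u _ => norm_nonneg _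
  have hNS : N ≤ S := intervalIntegral.integral_mono_on zero_le_one
    (iiOn h1.norm h01 h11) (iiOn hmax h01 h11) (fun u _ => le_max_left _ _)
  have hCS : (∫ u in (0:ℝ)..1, φ u) ^ 2 ≤ N * J := by
    rw [hNdef, hJdef, intervalIntegral.integral_of_le zero_le_one,
      intervalIntegral.integral_of_le zero_le_one, intervalIntegral.integral_of_le zero_le_one]
    exact cs_sq (f := fun u => ‖σ₁ u‖) (g := fun u => ‖G u‖)
      (fun u => norm_nonneg _) (fun u => norm_nonneg _)
      (IntegrableOn.mono_set h1.norm Ioc_subset_Icc_self) (hJint.mono_set Ioc_subset_Icc_self)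
      ((hGc.mono Ioc_subset_Icc_self).norm.aestronglyMeasurable measurableSet_Ioc)
  have hφΦIcc : IntegrableOn (fun t => φ t * Φ t) (Icc (0:ℝ) 1) :=
    hφi.mul_continuousOn hΦc isCompact_Icc
  have hT1i : IntervalIntegrable (fun t => ‖σ₁ t‖ * (‖G t‖ * ‖H t‖)) volume 0 x :=
    iiOn (IntegrableOn.mul_continuousOn h1.norm (hGc.norm.mul hHc.norm) isCompact_Icc) h01 hx
  have hT2i : IntervalIntegrable (fun t => ‖σ₁ t‖ * (Real.exp (2*r) * J)) volume 0 x :=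
    (iiOn h1.norm h01 hx).mul_const _
  have hB : ContinuousOn (fun t => ‖G t‖ * ‖H t‖ + Real.exp (2*r) * J) (Icc (0:ℝ) 1) :=
    (hGc.norm.mul hHc.norm).add continuousOn_const
  have hBi : IntervalIntegrable
      (fun t => ‖σ₁ t‖ * (‖G t‖ * ‖H t‖ + Real.exp (2*r) * J)) volume 0 x :=
    iiOn (IntegrableOn.mul_continuousOn h1.norm hB isCompact_Icc) h01 hx
  have main1 : ‖K1 σ₁ σ₂ μ H x‖
      ≤ ∫ t in (0:ℝ)..x, ‖σ₁ t‖ * (‖G t‖ * ‖H t‖ + Real.exp (2*r) * J) := by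
    simp only [K1]
    refine (intervalIntegral.norm_integral_le_abs_of_norm_le ?_ hBi).trans ?_
    · filter_upwards [ae_restrict_mem measurableSet_uIoc] with t htm
      rw [uIoc_of_le hx0] at htm
      have ht01 : t ∈ Icc (0:ℝ) 1 := ⟨htm.1.le, htm.2.trans hxle⟩
      rw [norm_mul]
      exact mul_le_mul_of_nonneg_left (hinner t ht01) (norm_nonneg _)
    · have hnn : 0 ≤ ∫ t in (0:ℝ)..x, ‖σ₁ t‖ * (‖G t‖ * ‖H t‖ + Real.exp (2*r) * J) :=
        intervalIntegral.integral_nonneg hx0 fun t _ =>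
          mul_nonneg (norm_nonneg _) (add_nonneg
            (mul_nonneg (norm_nonneg _) (norm_nonneg _))
            (mul_nonneg (Real.exp_pos _).le hJ0))
      rw [abs_of_nonneg hnn]
  have split : (∫ t in (0:ℝ)..x, ‖σ₁ t‖ * (‖G t‖ * ‖H t‖ + Real.exp (2*r) * J))
      = (∫ t in (0:ℝ)..x, ‖σ₁ t‖ * (‖G t‖ * ‖H t‖))
        + ∫ t in (0:ℝ)..x, ‖σ₁ t‖ * (Real.exp (2*r) * J) := by
    rw [← intervalIntegral.integral_add hT1i hT2i]
    exact intervalIntegral.integral_congr fun t _ => by ring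
  have hT1 : (∫ t in (0:ℝ)..x, ‖σ₁ t‖ * (‖G t‖ * ‖H t‖)) ≤ N * J / 2 := by
    have s1 : (∫ t in (0:ℝ)..x, ‖σ₁ t‖ * (‖G t‖ * ‖H t‖)) ≤ ∫ t in (0:ℝ)..x, φ t * Φ t := by
      refine intervalIntegral.integral_mono_on hx0 hT1i (iiOn hφΦIcc h01 hx) fun t ht => ?_
      have ht01 : t ∈ Icc (0:ℝ) 1 := ⟨ht.1, ht.2.trans hxle⟩
      calc ‖σ₁ t‖ * (‖G t‖ * ‖H t‖) ≤ ‖σ₁ t‖ * (‖G t‖ * Φ t) := by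
            have := hHb t ht01
            gcongr
        _ = φ t * Φ t := by rw [hφdef]; ring
    have s2 : (∫ t in (0:ℝ)..x, φ t * Φ t) ≤ ∫ t in (0:ℝ)..1, φ t * Φ t := by
      rw [← intervalIntegral.integral_add_adjacent_intervals
        (iiOn hφΦIcc h01 hx) (iiOn hφΦIcc hx h11)]
      have h0t : 0 ≤ ∫ t in x..(1:ℝ), φ t * Φ t :=
        intervalIntegral.integral_nonneg hxle fun t ht =>
          mul_nonneg (hφ0 t) (hΦ0 t ⟨hx0.trans ht.1, ht.2⟩)
      linarith
    have s3 : (∫ t in (0:ℝ)..1, φ t * Φ t) = (∫ t in (0:ℝ)..1, φ t)^2 / 2 := by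
      simpa only [← hΦdef] using half_sq hφi
    have s4 : (∫ t in (0:ℝ)..1, φ t)^2 / 2 ≤ N * J / 2 := by linarith [hCS]
    linarith [s1, s2, s3.le, s3.ge, s4]
  have hT2 : (∫ t in (0:ℝ)..x, ‖σ₁ t‖ * (Real.exp (2*r) * J)) ≤ N * (Real.exp (2*r) * J) := by
    rw [intervalIntegral.integral_mul_const]
    have hc0 : 0 ≤ Real.exp (2*r) * J := mul_nonneg (Real.exp_pos _).le hJ0
    refine mul_le_mul_of_nonneg_right ?_ hc0
    rw [hNdef, ← intervalIntegral.integral_add_adjacent_intervals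
      (iiOn h1.norm h01 hx) (iiOn h1.norm hx h11)]
    have h0t : 0 ≤ ∫ t in x..(1:ℝ), ‖σ₁ t‖ :=
      intervalIntegral.integral_nonneg hxle fun _ _ => norm_nonneg _
    linarith
  rw [hJeq]
  have := main1.trans (le_of_eq split |>.trans (add_le_add hT1 hT2))
  nlinarith [this, mul_nonneg (mul_nonneg (sub_nonneg.2 hNS) hJ0)
    (le_of_lt (by positivity : (0:ℝ) < Real.exp (2*r) + 1/2))]

lemma half_sq' {φ : ℝ → ℝ} (hφ : IntegrableOn φ (Icc (0:ℝ) 1)) :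
    (∫ t in (0:ℝ)..1, φ t * ∫ u in t..(1:ℝ), φ u) = (∫ t in (0:ℝ)..1, φ t) ^ 2 / 2 := by
  rw [← tri_swap zero_le_one (hφ.mono_set Ioc_subset_Icc_self) (hφ.mono_set Ioc_subset_Icc_self)]
  exact half_sq hφ

def Ffun (σ₁ : ℝ → ℂ) (μ : ℂ) : ℝ → ℂ := fun t =>
  ∫ s in (0:ℝ)..t, Complex.exp (2 * Complex.I * μ * (t - s)) * σ₁ s

lemma gamma01_eq (σ₁ : ℝ → ℂ) (μ : ℂ) (x : ℝ) : gamma01 σ₁ μ x = ‖Ffun σ₁ μ x‖ := rfl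

lemma Ffun_cont {σ₁ : ℝ → ℂ} (μ : ℂ) (h1 : IntegrableOn σ₁ (Icc (0:ℝ) 1)) :
    ContinuousOn (Ffun σ₁ μ) (Icc (0:ℝ) 1) := by
  have hEc : Continuous fun u : ℝ => Complex.exp (-(2 * Complex.I * μ * (u:ℂ))) :=
    Complex.continuous_exp.comp (continuous_const.mul Complex.continuous_ofReal).neg
  have hIE : IntegrableOn (fun s : ℝ => Complex.exp (-(2 * Complex.I * μ * (s:ℂ))) * σ₁ s)
      (Icc (0:ℝ) 1) := h1.continuousOn_mul hEc.continuousOn isCompact_Icc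
  have hP : ContinuousOn (fun t : ℝ => ∫ s in (0:ℝ)..t,
      Complex.exp (-(2 * Complex.I * μ * (s:ℂ))) * σ₁ s) (Icc (0:ℝ) 1) := by
    have := intervalIntegral.continuousOn_primitive_interval
      (f := fun s : ℝ => Complex.exp (-(2 * Complex.I * μ * (s:ℂ))) * σ₁ s)
      (μ := volume) (a := (0:ℝ)) (b := (1:ℝ))
      (by rwa [uIcc_of_le (zero_le_one' ℝ)])
    rwa [uIcc_of_le (zero_le_one' ℝ)] at this
  have hNc : Continuous fun t : ℝ => Complex.exp (2 * Complex.I * μ * (t:ℂ)) :=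
    Complex.continuous_exp.comp (continuous_const.mul Complex.continuous_ofReal)
  refine ContinuousOn.congr (hNc.continuousOn.mul hP) fun t _ => ?_
  show Ffun σ₁ μ t = _
  rw [Ffun, Pi.mul_apply, ← intervalIntegral.integral_const_mul]
  refine intervalIntegral.integral_congr fun s _ => ?_
  have harg : 2 * Complex.I * μ * ((t:ℂ) - (s:ℂ))
      = 2 * Complex.I * μ * (t:ℂ) + -(2 * Complex.I * μ * (s:ℂ)) := by ring
  rw [harg, Complex.exp_add, mul_assoc]

lemma K2e_eq (σ₁ σ₂ : ℝ → ℂ) (μ : ℂ) (x : ℝ) :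
    K2 σ₁ σ₂ μ eFun x = ∫ u in x..(1:ℝ), σ₂ u * Ffun σ₁ μ u := by
  simp only [K2, eFun, mul_one, Ffun]

lemma K2_bound (σ₁ σ₂ : ℝ → ℂ)
    (h1 : IntegrableOn σ₁ (Icc (0:ℝ) 1)) (h2 : IntegrableOn σ₂ (Icc (0:ℝ) 1))
    (r : ℝ) (hr : 0 ≤ r) (μ : ℂ) (him : -r < μ.im) (x : ℝ) (hx : x ∈ Icc (0:ℝ) 1) :
    ‖K2 σ₁ σ₂ μ (K2 σ₁ σ₂ μ eFun) x‖
      ≤ (Real.exp (2*r) + 1/2) * (∫ t in (0:ℝ)..1, max ‖σ₁ t‖ ‖σ₂ t‖)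
          * ((∫ s in (0:ℝ)..1, ‖σ₂ s‖ * (gamma01 σ₁ μ s) ^ 2)) := by
  have h01 : (0:ℝ) ∈ Icc (0:ℝ) 1 := ⟨le_refl 0, zero_le_one⟩
  have h11 : (1:ℝ) ∈ Icc (0:ℝ) 1 := ⟨zero_le_one, le_refl 1⟩
  set F : ℝ → ℂ := Ffun σ₁ μ with hFdef
  have hFc : ContinuousOn F (Icc (0:ℝ) 1) := Ffun_cont μ h1
  set H : ℝ → ℂ := K2 σ₁ σ₂ μ eFun with hHdef
  have hHeq : ∀ s : ℝ, H s = ∫ u in s..(1:ℝ), σ₂ u * F u := fun s => K2e_eq σ₁ σ₂ μ s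
  have hσF : ∀ {a b : ℝ}, a ∈ Icc (0:ℝ) 1 → b ∈ Icc (0:ℝ) 1 →
      IntervalIntegrable (fun u => σ₂ u * F u) volume a b := by
    intro a b ha hb
    exact iiOn (h2.mul_continuousOn hFc isCompact_Icc) ha hb
  have hHc : ContinuousOn H (Icc (0:ℝ) 1) := by
    have hint : IntegrableOn (fun u => σ₂ u * F u) (uIcc (0:ℝ) 1) := by
      rw [uIcc_of_le (zero_le_one' ℝ)]
      exact h2.mul_continuousOn hFc isCompact_Icc
    have := intervalIntegral.continuousOn_primitive_interval_left (μ := volume) hint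
    rw [uIcc_of_le (zero_le_one' ℝ)] at this
    exact ContinuousOn.congr this fun s _ => hHeq s
  -- the key identity
  have key : ∀ t ∈ Icc (0:ℝ) 1,
      (∫ s in (0:ℝ)..t, Complex.exp (2 * Complex.I * μ * ((t:ℂ) - (s:ℂ))) * σ₁ s * H s)
      = F t * H t + ∫ u in (0:ℝ)..t,
          σ₂ u * F u * (Complex.exp (2 * Complex.I * μ * ((t:ℂ) - (u:ℂ))) * F u) := by
    intro t ht
    have hEcont : Continuous fun s : ℝ => Complex.exp (2 * Complex.I * μ * ((t:ℂ) - (s:ℂ))) :=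
      Complex.continuous_exp.comp
        (continuous_const.mul (continuous_const.sub Complex.continuous_ofReal))
    have hEσ : IntervalIntegrable
        (fun s => Complex.exp (2 * Complex.I * μ * ((t:ℂ) - (s:ℂ))) * σ₁ s) volume 0 t :=
      (iiOn h1 h01 ht).continuousOn_mul hEcont.continuousOn
    have hprim : ContinuousOn (fun s => ∫ u in s..t, σ₂ u * F u) (uIcc (0:ℝ) t) := by
      refine intervalIntegral.continuousOn_primitive_interval_left (μ := volume) ?_
      rw [uIcc_of_le ht.1]
      exact (h2.mul_continuousOn hFc isCompact_Icc).mono_set (Icc_subset_Icc_right ht.2)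
    have stepA : (∫ s in (0:ℝ)..t, Complex.exp (2 * Complex.I * μ * ((t:ℂ) - (s:ℂ))) * σ₁ s * H s)
        = (∫ s in (0:ℝ)..t, Complex.exp (2 * Complex.I * μ * ((t:ℂ) - (s:ℂ))) * σ₁ s * H t)
          + ∫ s in (0:ℝ)..t, Complex.exp (2 * Complex.I * μ * ((t:ℂ) - (s:ℂ))) * σ₁ s
              * ∫ u in s..t, σ₂ u * F u := by
      rw [← intervalIntegral.integral_add (hEσ.mul_const (H t)) (hEσ.mul_continuousOn hprim)]
      refine intervalIntegral.integral_congr fun s hs => ?_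
      rw [uIcc_of_le ht.1] at hs
      have hs01 : s ∈ Icc (0:ℝ) 1 := ⟨hs.1, hs.2.trans ht.2⟩
      have hsplit : H s = H t + ∫ u in s..t, σ₂ u * F u := by
        rw [hHeq, hHeq]
        rw [← intervalIntegral.integral_add_adjacent_intervals (hσF hs01 ht) (hσF ht h11)]
        ring
      rw [hsplit]; ring
    have first : (∫ s in (0:ℝ)..t,
        Complex.exp (2 * Complex.I * μ * ((t:ℂ) - (s:ℂ))) * σ₁ s * H t) = F t * H t := by
      rw [intervalIntegral.integral_mul_const]
      rfl
    have second : (∫ s in (0:ℝ)..t, Complex.exp (2 * Complex.I * μ * ((t:ℂ) - (s:ℂ))) * σ₁ s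
            * ∫ u in s..t, σ₂ u * F u)
        = ∫ u in (0:ℝ)..t, σ₂ u * F u
            * (Complex.exp (2 * Complex.I * μ * ((t:ℂ) - (u:ℂ))) * F u) := by
      have hgI : IntegrableOn
          (fun s : ℝ => Complex.exp (2 * Complex.I * μ * ((t:ℂ) - (s:ℂ))) * σ₁ s) (Ioc 0 t) :=
        (intervalIntegrable_iff_integrableOn_Ioc_of_le ht.1).mp hEσ
      have hhI : IntegrableOn (fun u => σ₂ u * F u) (Ioc 0 t) :=
        (intervalIntegrable_iff_integrableOn_Ioc_of_le ht.1).mp (hσF h01 ht)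
      rw [← tri_swap ht.1 hgI hhI]
      refine intervalIntegral.integral_congr fun u hu => ?_
      rw [uIcc_of_le ht.1] at hu
      have e : (∫ s in (0:ℝ)..u, Complex.exp (2 * Complex.I * μ * ((t:ℂ) - (s:ℂ))) * σ₁ s)
          = Complex.exp (2 * Complex.I * μ * ((t:ℂ) - (u:ℂ))) * F u := by
        rw [hFdef, Ffun, ← intervalIntegral.integral_const_mul]
        refine intervalIntegral.integral_congr fun s _ => ?_
        have harg : 2 * Complex.I * μ * ((t:ℂ) - (s:ℂ))
            = 2 * Complex.I * μ * ((t:ℂ) - (u:ℂ)) + 2 * Complex.I * μ * ((u:ℂ) - (s:ℂ)) := by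
          ring
        rw [harg, Complex.exp_add, mul_assoc]
      rw [e]
    rw [stepA, first, second]
  -- quantities
  set J := ∫ u in (0:ℝ)..1, ‖σ₂ u‖ * ‖F u‖ ^ 2 with hJdef
  have hJeq : (∫ s in (0:ℝ)..1, ‖σ₂ s‖ * (gamma01 σ₁ μ s) ^ 2) = J := by
    rw [hJdef]
    simp only [gamma01_eq, ← hFdef]
  have hJint : IntegrableOn (fun u => ‖σ₂ u‖ * ‖F u‖ ^ 2) (Icc (0:ℝ) 1) :=
    IntegrableOn.mul_continuousOn h2.norm (hFc.norm.pow 2) isCompact_Icc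
  have hJ0 : 0 ≤ J := intervalIntegral.integral_nonneg zero_le_one
    (fun u _ => mul_nonneg (norm_nonneg _) (sq_nonneg _))
  set φ : ℝ → ℝ := fun u => ‖σ₂ u‖ * ‖F u‖ with hφdef
  have hφi : IntegrableOn φ (Icc (0:ℝ) 1) :=
    IntegrableOn.mul_continuousOn h2.norm hFc.norm isCompact_Icc
  have hφ0 : ∀ u, 0 ≤ φ u := fun u => mul_nonneg (norm_nonneg _) (norm_nonneg _)
  set Φ : ℝ → ℝ := fun t => ∫ u in t..(1:ℝ), φ u with hΦdef
  have hΦc : ContinuousOn Φ (Icc (0:ℝ) 1) := by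
    have hint : IntegrableOn φ (uIcc (0:ℝ) 1) := by
      rw [uIcc_of_le (zero_le_one' ℝ)]; exact hφi
    have := intervalIntegral.continuousOn_primitive_interval_left (μ := volume) hint
    rwa [uIcc_of_le (zero_le_one' ℝ)] at this
  have hΦ0 : ∀ t ∈ Icc (0:ℝ) 1, 0 ≤ Φ t := fun t ht =>
    intervalIntegral.integral_nonneg ht.2 (fun u _ => hφ0 u)
  have hHb : ∀ s ∈ Icc (0:ℝ) 1, ‖H s‖ ≤ Φ s := by
    intro s hs
    rw [hHeq]
    refine (intervalIntegral.norm_integral_le_integral_norm hs.2).trans_eq ?_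
    exact intervalIntegral.integral_congr fun u _ => norm_mul _ _
  -- bound on the inner integral
  have hinner : ∀ t ∈ Icc (0:ℝ) 1,
      ‖∫ s in (0:ℝ)..t, Complex.exp (2 * Complex.I * μ * ((t:ℂ) - (s:ℂ))) * σ₁ s * H s‖
        ≤ ‖F t‖ * ‖H t‖ + Real.exp (2*r) * J := by
    intro t ht
    rw [key t ht]
    refine (norm_add_le _ _).trans ?_
    rw [norm_mul]
    refine add_le_add le_rfl ?_
    have hboundII : IntervalIntegrable
        (fun u => Real.exp (2*r) * (‖σ₂ u‖ * ‖F u‖^2)) volume 0 t :=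
      (iiOn hJint h01 ht).const_mul _
    refine (intervalIntegral.norm_integral_le_abs_of_norm_le ?_ hboundII).trans ?_
    · filter_upwards [ae_restrict_mem measurableSet_uIoc] with u hu
      rw [uIoc_of_le ht.1] at hu
      have h0u : u ≤ t := hu.2
      have hu1 : t - u ≤ 1 := by
        have := hu.1; have := ht.2; linarith
      have hE := exp_re_bound μ r hr him h0u hu1
      rw [norm_mul, norm_mul, norm_mul]
      calc ‖σ₂ u‖ * ‖F u‖ * (‖Complex.exp (2 * Complex.I * μ * ((t:ℂ) - (u:ℂ)))‖ * ‖F u‖)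
          ≤ ‖σ₂ u‖ * ‖F u‖ * (Real.exp (2*r) * ‖F u‖) := by gcongr
        _ = Real.exp (2*r) * (‖σ₂ u‖ * ‖F u‖^2) := by ring
    · have hnn : 0 ≤ ∫ u in (0:ℝ)..t, Real.exp (2*r) * (‖σ₂ u‖ * ‖F u‖^2) :=
        intervalIntegral.integral_nonneg ht.1 fun u _ =>
          mul_nonneg (Real.exp_pos _).le (mul_nonneg (norm_nonneg _) (sq_nonneg _))
      rw [abs_of_nonneg hnn, intervalIntegral.integral_const_mul]
      have hto1 : (∫ u in (0:ℝ)..t, ‖σ₂ u‖ * ‖F u‖^2) ≤ J := by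
        rw [hJdef, ← intervalIntegral.integral_add_adjacent_intervals
          (iiOn hJint h01 ht) (iiOn hJint ht h11)]
        have h0t : 0 ≤ ∫ u in t..(1:ℝ), ‖σ₂ u‖ * ‖F u‖^2 :=
          intervalIntegral.integral_nonneg ht.2 fun u _ =>
            mul_nonneg (norm_nonneg _) (sq_nonneg _)
        linarith
      exact mul_le_mul_of_nonneg_left hto1 (Real.exp_pos _).le
  -- assembling
  have hx0 : (0:ℝ) ≤ x := hx.1
  have hxle : x ≤ 1 := hx.2
  have hmax : IntegrableOn (fun u => max ‖σ₁ u‖ ‖σ₂ u‖) (Icc (0:ℝ) 1) := by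
    have hsup := h1.norm.sup h2.norm
    exact hsup.congr (Filter.Eventually.of_forall fun u => rfl)
  set S := ∫ t in (0:ℝ)..1, max ‖σ₁ t‖ ‖σ₂ t‖ with hSdef
  set N := ∫ t in (0:ℝ)..1, ‖σ₂ t‖ with hNdef
  have hN0 : 0 ≤ N := intervalIntegral.integral_nonneg zero_le_one fun u _ => norm_nonneg _
  have hNS : N ≤ S := intervalIntegral.integral_mono_on zero_le_one
    (iiOn h2.norm h01 h11) (iiOn hmax h01 h11) (fun u _ => le_max_right _ _)
  have hCS : (∫ u in (0:ℝ)..1, φ u) ^ 2 ≤ N * J := by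
    rw [hNdef, hJdef, intervalIntegral.integral_of_le zero_le_one,
      intervalIntegral.integral_of_le zero_le_one, intervalIntegral.integral_of_le zero_le_one]
    exact cs_sq (f := fun u => ‖σ₂ u‖) (g := fun u => ‖F u‖)
      (fun u => norm_nonneg _) (fun u => norm_nonneg _)
      (IntegrableOn.mono_set h2.norm Ioc_subset_Icc_self) (hJint.mono_set Ioc_subset_Icc_self)
      ((hFc.mono Ioc_subset_Icc_self).norm.aestronglyMeasurable measurableSet_Ioc)
  have hφΦIcc : IntegrableOn (fun t => φ t * Φ t) (Icc (0:ℝ) 1) :=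
    hφi.mul_continuousOn hΦc isCompact_Icc
  have hT1i : IntervalIntegrable (fun t => ‖σ₂ t‖ * (‖F t‖ * ‖H t‖)) volume x 1 :=
    iiOn (IntegrableOn.mul_continuousOn h2.norm (hFc.norm.mul hHc.norm) isCompact_Icc) hx h11
  have hT2i : IntervalIntegrable (fun t => ‖σ₂ t‖ * (Real.exp (2*r) * J)) volume x 1 :=
    (iiOn h2.norm hx h11).mul_const _
  have hB : ContinuousOn (fun t => ‖F t‖ * ‖H t‖ + Real.exp (2*r) * J) (Icc (0:ℝ) 1) :=
    (hFc.norm.mul hHc.norm).add continuousOn_const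
  have hBi : IntervalIntegrable
      (fun t => ‖σ₂ t‖ * (‖F t‖ * ‖H t‖ + Real.exp (2*r) * J)) volume x 1 :=
    iiOn (IntegrableOn.mul_continuousOn h2.norm hB isCompact_Icc) hx h11
  have main1 : ‖K2 σ₁ σ₂ μ H x‖
      ≤ ∫ t in x..(1:ℝ), ‖σ₂ t‖ * (‖F t‖ * ‖H t‖ + Real.exp (2*r) * J) := by
    simp only [K2]
    refine (intervalIntegral.norm_integral_le_abs_of_norm_le ?_ hBi).trans ?_
    · filter_upwards [ae_restrict_mem measurableSet_uIoc] with t htm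
      rw [uIoc_of_le hxle] at htm
      have ht01 : t ∈ Icc (0:ℝ) 1 := ⟨hx0.trans htm.1.le, htm.2⟩
      rw [norm_mul]
      exact mul_le_mul_of_nonneg_left (hinner t ht01) (norm_nonneg _)
    · have hnn : 0 ≤ ∫ t in x..(1:ℝ), ‖σ₂ t‖ * (‖F t‖ * ‖H t‖ + Real.exp (2*r) * J) :=
        intervalIntegral.integral_nonneg hxle fun t _ =>
          mul_nonneg (norm_nonneg _) (add_nonneg
            (mul_nonneg (norm_nonneg _) (norm_nonneg _))
            (mul_nonneg (Real.exp_pos _).le hJ0))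
      rw [abs_of_nonneg hnn]
  have split : (∫ t in x..(1:ℝ), ‖σ₂ t‖ * (‖F t‖ * ‖H t‖ + Real.exp (2*r) * J))
      = (∫ t in x..(1:ℝ), ‖σ₂ t‖ * (‖F t‖ * ‖H t‖))
        + ∫ t in x..(1:ℝ), ‖σ₂ t‖ * (Real.exp (2*r) * J) := by
    rw [← intervalIntegral.integral_add hT1i hT2i]
    exact intervalIntegral.integral_congr fun t _ => by ring
  have hT1 : (∫ t in x..(1:ℝ), ‖σ₂ t‖ * (‖F t‖ * ‖H t‖)) ≤ N * J / 2 := by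
    have s1 : (∫ t in x..(1:ℝ), ‖σ₂ t‖ * (‖F t‖ * ‖H t‖)) ≤ ∫ t in x..(1:ℝ), φ t * Φ t := by
      refine intervalIntegral.integral_mono_on hxle hT1i (iiOn hφΦIcc hx h11) fun t ht => ?_
      have ht01 : t ∈ Icc (0:ℝ) 1 := ⟨hx0.trans ht.1, ht.2⟩
      calc ‖σ₂ t‖ * (‖F t‖ * ‖H t‖) ≤ ‖σ₂ t‖ * (‖F t‖ * Φ t) := by
            have := hHb t ht01
            gcongr
        _ = φ t * Φ t := by rw [hφdef]; ring
    have s2 : (∫ t in x..(1:ℝ), φ t * Φ t) ≤ ∫ t in (0:ℝ)..1, φ t * Φ t := by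
      rw [← intervalIntegral.integral_add_adjacent_intervals
        (iiOn hφΦIcc h01 hx) (iiOn hφΦIcc hx h11)]
      have h0t : 0 ≤ ∫ t in (0:ℝ)..x, φ t * Φ t :=
        intervalIntegral.integral_nonneg hx0 fun t ht =>
          mul_nonneg (hφ0 t) (hΦ0 t ⟨ht.1, ht.2.trans hxle⟩)
      linarith
    have s3 : (∫ t in (0:ℝ)..1, φ t * Φ t) = (∫ t in (0:ℝ)..1, φ t)^2 / 2 := by
      simpa only [← hΦdef] using half_sq' hφi
    have s4 : (∫ t in (0:ℝ)..1, φ t)^2 / 2 ≤ N * J / 2 := by linarith [hCS]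
    linarith [s1, s2, s3.le, s3.ge, s4]
  have hT2 : (∫ t in x..(1:ℝ), ‖σ₂ t‖ * (Real.exp (2*r) * J)) ≤ N * (Real.exp (2*r) * J) := by
    rw [intervalIntegral.integral_mul_const]
    have hc0 : 0 ≤ Real.exp (2*r) * J := mul_nonneg (Real.exp_pos _).le hJ0
    refine mul_le_mul_of_nonneg_right ?_ hc0
    rw [hNdef, ← intervalIntegral.integral_add_adjacent_intervals
      (iiOn h2.norm h01 hx) (iiOn h2.norm hx h11)]
    have h0t : 0 ≤ ∫ t in (0:ℝ)..x, ‖σ₂ t‖ :=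
      intervalIntegral.integral_nonneg hx0 fun _ _ => norm_nonneg _
    linarith
  rw [hJeq]
  have := main1.trans (le_of_eq split |>.trans (add_le_add hT1 hT2))
  nlinarith [this, mul_nonneg (mul_nonneg (sub_nonneg.2 hNS) hJ0)
    (le_of_lt (by positivity : (0:ℝ) < Real.exp (2*r) + 1/2))]


/-- explicit bound for `K_j² e` and the resulting `O(γ̃)` estimate. -/
theorem stmt4
    (p : ℝ≥0∞) (hp1 : 1 ≤ p) (hp2 : p < 2)
    (σ₁ σ₂ : ℝ → ℂ) (hσ₁m : Measurable σ₁) (hσ₂m : Measurable σ₂)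
    (hσ₁ : MemLp σ₁ p (volume.restrict (Icc (0:ℝ) 1)))
    (hσ₂ : MemLp σ₂ p (volume.restrict (Icc (0:ℝ) 1)))
    (r : ℝ) (hr : 0 ≤ r) :
    (∀ μ : ℂ, -r < μ.im → ∀ x ∈ Icc (0:ℝ) 1,
      ‖K1 σ₁ σ₂ μ (K1 σ₁ σ₂ μ eFun) x‖
          ≤ (Real.exp (2*r) + 1/2) * (∫ t in (0:ℝ)..1, max ‖σ₁ t‖ ‖σ₂ t‖) * gammaT σ₁ σ₂ μ
      ∧ ‖K2 σ₁ σ₂ μ (K2 σ₁ σ₂ μ eFun) x‖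
          ≤ (Real.exp (2*r) + 1/2) * (∫ t in (0:ℝ)..1, max ‖σ₁ t‖ ‖σ₂ t‖) * gammaT σ₁ σ₂ μ)
    ∧ ∃ c > 0, ∀ μ : ℂ, -r < μ.im → ∀ x ∈ Icc (0:ℝ) 1,
        ‖K1 σ₁ σ₂ μ (K1 σ₁ σ₂ μ eFun) x‖ ≤ c * gammaT σ₁ σ₂ μ
        ∧ ‖K2 σ₁ σ₂ μ (K2 σ₁ σ₂ μ eFun) x‖ ≤ c * gammaT σ₁ σ₂ μ := by
  have hfin : IsFiniteMeasure (volume.restrict (Icc (0:ℝ) 1)) :=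
    ⟨by rw [Measure.restrict_apply_univ]; exact measure_Icc_lt_top⟩
  have h1i : IntegrableOn σ₁ (Icc (0:ℝ) 1) :=
    memLp_one_iff_integrable.mp (hσ₁.mono_exponent hp1)
  have h2i : IntegrableOn σ₂ (Icc (0:ℝ) 1) :=
    memLp_one_iff_integrable.mp (hσ₂.mono_exponent hp1)
  have hg1 : ∀ μ : ℂ, 0 ≤ ∫ s in (0:ℝ)..1, ‖σ₂ s‖ * (gamma01 σ₁ μ s) ^ 2 := fun μ =>
    intervalIntegral.integral_nonneg zero_le_one fun s _ =>
      mul_nonneg (norm_nonneg _) (sq_nonneg _)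
  have hg2 : ∀ μ : ℂ, 0 ≤ ∫ s in (0:ℝ)..1, ‖σ₁ s‖ * (gamma02 σ₂ μ s) ^ 2 := fun μ =>
    intervalIntegral.integral_nonneg zero_le_one fun s _ =>
      mul_nonneg (norm_nonneg _) (sq_nonneg _)
  have hS0 : 0 ≤ ∫ t in (0:ℝ)..1, max ‖σ₁ t‖ ‖σ₂ t‖ :=
    intervalIntegral.integral_nonneg zero_le_one fun t _ =>
      le_trans (norm_nonneg _) (le_max_left _ _)
  have hco : 0 ≤ (Real.exp (2*r) + 1/2) * ∫ t in (0:ℝ)..1, max ‖σ₁ t‖ ‖σ₂ t‖ :=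
    mul_nonneg (by positivity) hS0
  have main : ∀ μ : ℂ, -r < μ.im → ∀ x ∈ Icc (0:ℝ) 1,
      ‖K1 σ₁ σ₂ μ (K1 σ₁ σ₂ μ eFun) x‖
          ≤ (Real.exp (2*r) + 1/2) * (∫ t in (0:ℝ)..1, max ‖σ₁ t‖ ‖σ₂ t‖) * gammaT σ₁ σ₂ μ
      ∧ ‖K2 σ₁ σ₂ μ (K2 σ₁ σ₂ μ eFun) x‖
          ≤ (Real.exp (2*r) + 1/2) * (∫ t in (0:ℝ)..1, max ‖σ₁ t‖ ‖σ₂ t‖) * gammaT σ₁ σ₂ μ := by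
    intro μ him x hx
    constructor
    · refine (K1_bound σ₁ σ₂ h1i h2i r hr μ him x hx).trans ?_
      exact mul_le_mul_of_nonneg_left (by rw [gammaT]; linarith [hg1 μ]) hco
    · refine (K2_bound σ₁ σ₂ h1i h2i r hr μ him x hx).trans ?_
      exact mul_le_mul_of_nonneg_left (by rw [gammaT]; linarith [hg2 μ]) hco
  refine ⟨main, max 1 ((Real.exp (2*r) + 1/2) * ∫ t in (0:ℝ)..1, max ‖σ₁ t‖ ‖σ₂ t‖),
    lt_of_lt_of_le one_pos (le_max_left _ _), ?_⟩
  intro μ him x hx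
  have hgT : 0 ≤ gammaT σ₁ σ₂ μ := by
    rw [gammaT]; linarith [hg1 μ, hg2 μ]
  obtain ⟨b1, b2⟩ := main μ him x hx
  exact ⟨b1.trans (mul_le_mul_of_nonneg_right (le_max_right _ _) hgT),
    b2.trans (mul_le_mul_of_nonneg_right (le_max_right _ _) hgT)⟩
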